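/- A graph G is a t-block graph (a chordal graph in which any two maximal cliques intersect in at most t vertices) if and only if G is both chordal and a t-flow graph (every pair of non-adjacent vertices can be disconnected by removing at most t vertices). -/

import Mathlib

/-- `G` contains an induced subgraph isomorphic to `H`. -/
def ContainsInduced {V : Type*} (G : SimpleGraph V) {n : ℕ}
    (H : SimpleGraph (Fin n)) : Prop :=
  ∃ f : Fin n ↪ V, ∀ a b, H.Adj a b ↔ G.Adj (f a) (f b)

/-- A graph is chordal iff it has no induced cycle of length at least 4. -/
def Chordal {V : Type*} (G : SimpleGraph V) : Prop :=
  ∀ n : ℕ, 4 ≤ n → ¬ ContainsInduced G (SimpleGraph.cycleGraph n)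

/-- `s` is a maximal clique of `G`. -/
def IsMaxClique {V : Type*} (G : SimpleGraph V) (s : Set V) : Prop :=
  G.IsClique s ∧ ∀ t : Set V, G.IsClique t → s ⊆ t → t = s

set_option linter.unusedSectionVars false
set_option linter.unusedVariables false

namespace TBAux
open SimpleGraph
variable {V : Type*} [Fintype V] [DecidableEq V]

/-- reachability in `G` by a walk avoiding `S` (endpoints included). -/
def AReach (G : SimpleGraph V) (S : Finset V) (a b : V) : Prop :=
  ∃ w : G.Walk a b, ∀ x ∈ w.support, x ∉ S

variable {G : SimpleGraph V} {S : Finset V}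

lemma AReach.left_not_mem {a b : V} (h : AReach G S a b) : a ∉ S := by
  obtain ⟨w, hw⟩ := h; exact hw a w.start_mem_support

lemma AReach.right_not_mem {a b : V} (h : AReach G S a b) : b ∉ S := by
  obtain ⟨w, hw⟩ := h; exact hw b w.end_mem_support

lemma AReach.refl {a : V} (h : a ∉ S) : AReach G S a a :=
  ⟨.nil, by simp [h]⟩

lemma AReach.symm {a b : V} (h : AReach G S a b) : AReach G S b a := by
  obtain ⟨w, hw⟩ := h
  exact ⟨w.reverse, by simp only [Walk.support_reverse, List.mem_reverse]; exact hw⟩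

lemma AReach.trans {a b c : V} (h : AReach G S a b) (h' : AReach G S b c) :
    AReach G S a c := by
  obtain ⟨w, hw⟩ := h; obtain ⟨w', hw'⟩ := h'
  refine ⟨w.append w', fun x hx => ?_⟩
  rcases (Walk.mem_support_append_iff _ _).1 hx with h | h
  · exact hw x h
  · exact hw' x h

lemma AReach.adj {a b c : V} (h : AReach G S a b) (hadj : G.Adj b c) (hc : c ∉ S) :
    AReach G S a c := by
  obtain ⟨w, hw⟩ := h
  refine ⟨w.concat hadj, fun x hx => ?_⟩
  rw [Walk.support_concat, List.mem_append] at hx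
  rcases hx with h | h
  · exact hw x h
  · simp only [List.mem_singleton] at h; subst h; exact hc

lemma AReach.of_mem_support {a b z : V} (h : AReach G S a b)
    (w : G.Walk a b) (hw : ∀ x ∈ w.support, x ∉ S) (hz : z ∈ w.support) :
    AReach G S a z :=
  ⟨w.takeUntil z hz, fun x hx => hw x (w.support_takeUntil_subset hz hx)⟩

/-- a chain (walk as a function) from `x` to `y` whose vertices lie in `C ∪ {x, y}`. -/
def Chn (G : SimpleGraph V) (C : Set V) (x y : V) (c : ℕ → V) (m : ℕ) : Prop :=
  c 0 = x ∧ c m = y ∧ (∀ i, i < m → G.Adj (c i) (c (i + 1))) ∧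
    (∀ i, i ≤ m → c i ∈ C ∨ c i = x ∨ c i = y)

lemma chn_shorten_adj {C : Set V} {x y : V} {c : ℕ → V} {m : ℕ}
    (hc : Chn G C x y c m) {a b : ℕ} (hab : a + 2 ≤ b) (hbm : b ≤ m)
    (hadj : G.Adj (c a) (c b)) :
    ∃ c' m', Chn G C x y c' m' ∧ m' < m := by
  obtain ⟨h0, hm, hch, hmem⟩ := hc
  obtain ⟨d, hd⟩ : ∃ d, b = a + 1 + d := ⟨b - a - 1, by omega⟩
  subst hd
  refine ⟨fun i => if i ≤ a then c i else c (i + d), m - d, ⟨?_, ?_, ?_, ?_⟩, by omega⟩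
  · have : (0:ℕ) ≤ a := by omega
    simp only [if_pos this, h0]
  · have h1 : ¬ (m - d ≤ a) := by omega
    simp only [if_neg h1, show m - d + d = m by omega, hm]
  · intro i hi
    rcases lt_trichotomy i a with h | h | h
    · simp only [if_pos (by omega : i ≤ a), if_pos (by omega : i + 1 ≤ a)]
      exact hch i (by omega)
    · subst h
      simp only [if_pos le_rfl, if_neg (by omega : ¬ (i + 1 ≤ i))]
      exact hadj
    · simp only [if_neg (by omega : ¬ (i ≤ a)), if_neg (by omega : ¬ (i + 1 ≤ a)),
        show i + 1 + d = i + d + 1 by omega]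
      exact hch (i + d) (by omega)
  · intro i hi
    by_cases h : i ≤ a
    · simp only [if_pos h]; exact hmem i (by omega)
    · simp only [if_neg h]; exact hmem (i + d) (by omega)

lemma chn_shorten_dup {C : Set V} {x y : V} {c : ℕ → V} {m : ℕ}
    (hc : Chn G C x y c m) {a b : ℕ} (hab : a < b) (hbm : b ≤ m)
    (hdup : c a = c b) :
    ∃ c' m', Chn G C x y c' m' ∧ m' < m := by
  obtain ⟨h0, hm, hch, hmem⟩ := hc
  obtain ⟨d, hd⟩ : ∃ d, b = a + d ∧ 1 ≤ d := ⟨b - a, by omega⟩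
  obtain ⟨hd, hd1⟩ := hd
  subst hd
  refine ⟨fun i => if i ≤ a then c i else c (i + d), m - d, ⟨?_, ?_, ?_, ?_⟩, by omega⟩
  · have : (0:ℕ) ≤ a := by omega
    simp only [if_pos this, h0]
  · by_cases h : m - d ≤ a
    · have ha : m - d = a := by omega
      have hb : a + d = m := by omega
      simp only [if_pos h, ha, hdup, hb, hm, if_pos le_rfl]
    · simp only [if_neg h, show m - d + d = m by omega, hm]
  · intro i hi
    rcases lt_trichotomy i a with h | h | h
    · simp only [if_pos (by omega : i ≤ a), if_pos (by omega : i + 1 ≤ a)]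
      exact hch i (by omega)
    · subst h
      simp only [if_pos le_rfl, if_neg (by omega : ¬ (i + 1 ≤ i)), hdup,
        show i + 1 + d = i + d + 1 by omega]
      exact hch (i + d) (by omega)
    · simp only [if_neg (by omega : ¬ (i ≤ a)), if_neg (by omega : ¬ (i + 1 ≤ a)),
        show i + 1 + d = i + d + 1 by omega]
      exact hch (i + d) (by omega)
  · intro i hi
    by_cases h : i ≤ a
    · simp only [if_pos h]; exact hmem i (by omega)
    · simp only [if_neg h]; exact hmem (i + d) (by omega)

/-- Minimal chains between nonadjacent vertices are induced paths. -/
lemma exists_min_chn {C : Set V} {x y : V} (hxy : x ≠ y) (hnadj : ¬ G.Adj x y)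
    (hex : ∃ m c, Chn G C x y c m) :
    ∃ c m, Chn G C x y c m ∧ 2 ≤ m ∧
      (∀ i j, i < j → j ≤ m → c i ≠ c j) ∧
      (∀ i j, i + 2 ≤ j → j ≤ m → ¬ G.Adj (c i) (c j)) := by
  classical
  have hex' : ∃ m, ∃ c, Chn G C x y c m := hex
  obtain ⟨c, hc⟩ := Nat.find_spec hex'
  set m := Nat.find hex' with hm
  have hmin : ∀ m' < m, ¬ ∃ c, Chn G C x y c m' := fun m' h => Nat.find_min hex' h
  have hm1 : m ≠ 0 := by
    intro h
    rw [h] at hc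
    exact hxy (hc.1 ▸ hc.2.1 ▸ rfl)
  have hm2 : m ≠ 1 := by
    intro h
    apply hnadj
    have := hc.2.2.1 0 (by omega)
    rwa [hc.1, show (0:ℕ)+1 = m by omega, hc.2.1] at this
  refine ⟨c, m, hc, by omega, ?_, ?_⟩
  · intro i j hij hjm hdup
    obtain ⟨c', m', hc', hlt⟩ := chn_shorten_dup hc hij hjm hdup
    exact hmin m' hlt ⟨c', hc'⟩
  · intro i j hij hjm hadj
    obtain ⟨c', m', hc', hlt⟩ := chn_shorten_adj hc hij hjm hadj
    exact hmin m' hlt ⟨c', hc'⟩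


/-- In a chordal graph, every cycle of length at least 4 has a chord. -/
lemma chordal_chord (hG : Chordal G) {n : ℕ} (hn : 4 ≤ n) (c : ℕ → V)
    (hinj : ∀ i j, i < n → j < n → c i = c j → i = j)
    (hadj : ∀ i, i + 1 < n → G.Adj (c i) (c (i + 1)))
    (hlast : G.Adj (c (n - 1)) (c 0)) :
    ∃ i j, i + 2 ≤ j ∧ j < n ∧ ¬(i = 0 ∧ j = n - 1) ∧ G.Adj (c i) (c j) := by
  by_contra hcon
  push_neg at hcon
  obtain ⟨k, rfl⟩ : ∃ k, n = k + 2 := ⟨n - 2, by omega⟩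
  apply hG (k + 2) hn
  have hval : ∀ u : Fin (k + 2), (u + 1).val = if u.val = k + 1 then 0 else u.val + 1 := by
    intro u
    rw [Fin.val_add_one]
    by_cases h : u = Fin.last (k + 1)
    · rw [if_pos h, if_pos (by rw [h]; rfl)]
    · rw [if_neg h, if_neg (fun hv => h (Fin.ext (by simpa [Fin.val_last] using hv)))]
  have key : ∀ u v : Fin (k + 2), v = u + 1 → G.Adj (c u.val) (c v.val) := by
    intro u v hv
    subst hv
    rw [hval u]
    by_cases hu : u.val = k + 1
    · rw [if_pos hu, hu]
      exact (show k + 1 = k + 2 - 1 by omega) ▸ hlast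
    · rw [if_neg hu]
      exact hadj u.val (by have := u.isLt; omega)
  have main : ∀ a b : Fin (k + 2), G.Adj (c a.val) (c b.val) → a.val < b.val →
      a = b + 1 ∨ b = a + 1 := by
    intro a b h hlt
    have hchar : b.val = a.val + 1 ∨ (a.val = 0 ∧ b.val = k + 1) := by
      by_contra hc
      push_neg at hc
      rcases Nat.lt_or_ge (a.val + 1) b.val with h2 | h2
      · exact hcon a.val b.val (by omega) b.isLt (fun h0 h1 => hc.2 h0 (by omega)) h
      · omega
    rcases hchar with h1 | ⟨h0, h1⟩
    · right
      exact Fin.ext (by rw [hval a, if_neg (by omega), h1])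
    · left
      exact Fin.ext (by rw [hval b, if_pos h1, h0])
  refine ⟨⟨fun a => c a.val, fun a b hab => ?_⟩, fun a b => ?_⟩
  · exact Fin.ext (hinj _ _ a.isLt b.isLt hab)
  · show (cycleGraph (k + 2)).Adj a b ↔ G.Adj (c a.val) (c b.val)
    rw [cycleGraph_adj]
    constructor
    · rintro (h | h)
      · rw [sub_eq_iff_eq_add] at h
        exact (key b a (h.trans (add_comm 1 b))).symm
      · rw [sub_eq_iff_eq_add] at h
        exact key a b (h.trans (add_comm 1 a))
    · intro h
      have hne : a.val ≠ b.val := fun hv => h.ne (congrArg c hv)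
      rcases Nat.lt_or_ge a.val b.val with hlt | hge
      · rcases main a b h hlt with h1 | h1
        · left; rw [sub_eq_iff_eq_add]; exact h1.trans (add_comm _ _)
        · right; rw [sub_eq_iff_eq_add]; exact h1.trans (add_comm _ _)
      · rcases main b a h.symm (by omega) with h1 | h1
        · right; rw [sub_eq_iff_eq_add]; exact h1.trans (add_comm _ _)
        · left; rw [sub_eq_iff_eq_add]; exact h1.trans (add_comm _ _)



/-- a walk from `x` to `y` avoiding `S` yields a `Chn` through the reachable set. -/
lemma chn_of_reach {S : Finset V} {w x y : V} {a a' : V}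
    (hax : G.Adj a x) (ha'y : G.Adj a' y)
    (hwa : AReach G S w a) (hwa' : AReach G S w a') :
    ∃ m c, Chn G {z | AReach G S w z} x y c m := by
  obtain ⟨w0, hw0⟩ := hwa.symm.trans hwa'
  refine ⟨_, (Walk.cons hax.symm (w0.concat ha'y)).getVert,
    Walk.getVert_zero _, Walk.getVert_length _, fun i hi => Walk.adj_getVert_succ _ hi, ?_⟩
  intro i hi
  have hmem : (Walk.cons hax.symm (w0.concat ha'y)).getVert i ∈
      (Walk.cons hax.symm (w0.concat ha'y)).support :=
    Walk.mem_support_iff_exists_getVert.2 ⟨i, rfl, hi⟩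
  rw [Walk.support_cons] at hmem
  rcases List.mem_cons.1 hmem with h | h
  · right; left; exact h
  · rw [Walk.support_concat, List.mem_append] at h
    rcases h with h | h
    · left
      exact hwa.trans (AReach.of_mem_support (⟨w0, hw0⟩) w0 hw0 h)
    · right; right; simpa using h

/-- In a chordal graph, a separator in which every vertex has neighbours in the components
of `u` and of `v` is a clique. -/
lemma sep_clique (hG : Chordal G) {u v : V} {S : Finset V}
    (hsep : ¬ AReach G S u v)
    (hnbru : ∀ x ∈ S, ∃ a, AReach G S u a ∧ G.Adj a x)
    (hnbrv : ∀ x ∈ S, ∃ a, AReach G S v a ∧ G.Adj a x) :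
    ∀ x ∈ S, ∀ y ∈ S, x ≠ y → G.Adj x y := by
  intro x hx y hy hxy
  by_contra hnadj
  set Cu : Set V := {z | AReach G S u z} with hCu
  set Cv : Set V := {z | AReach G S v z} with hCv
  have hdisj : ∀ z, z ∈ Cu → z ∈ Cv → False := fun z h1 h2 => hsep (h1.trans h2.symm)
  have hnoedge : ∀ a b, a ∈ Cu → b ∈ Cv → ¬ G.Adj a b := by
    intro a b ha hb hab
    exact hdisj b (ha.adj hab hb.right_not_mem) hb
  have hCuS : ∀ z, z ∈ Cu → z ∉ S := fun z h => h.right_not_mem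
  have hCvS : ∀ z, z ∈ Cv → z ∉ S := fun z h => h.right_not_mem
  -- minimal chains through each side
  obtain ⟨a1, ha1u, ha1x⟩ := hnbru x hx
  obtain ⟨a1', ha1'u, ha1'y⟩ := hnbru y hy
  obtain ⟨a2, ha2v, ha2x⟩ := hnbrv x hx
  obtain ⟨a2', ha2'v, ha2'y⟩ := hnbrv y hy
  obtain ⟨c1, m1, hc1, hm1, hinj1, hnochord1⟩ :=
    exists_min_chn hxy hnadj (chn_of_reach ha1x ha1'y ha1u ha1'u)
  obtain ⟨c2, m2, hc2, hm2, hinj2, hnochord2⟩ :=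
    exists_min_chn hxy hnadj (chn_of_reach ha2x ha2'y ha2v ha2'v)
  have hint1 : ∀ i, 1 ≤ i → i ≤ m1 - 1 → c1 i ∈ Cu := by
    intro i h1 h2
    rcases hc1.2.2.2 i (by omega) with h | h | h
    · exact h
    · exact absurd (hc1.1.trans h.symm) (hinj1 0 i (by omega) (by omega))
    · exact absurd (h.trans hc1.2.1.symm) (hinj1 i m1 (by omega) le_rfl)
  have hint2 : ∀ i, 1 ≤ i → i ≤ m2 - 1 → c2 i ∈ Cv := by
    intro i h1 h2
    rcases hc2.2.2.2 i (by omega) with h | h | h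
    · exact h
    · exact absurd (hc2.1.trans h.symm) (hinj2 0 i (by omega) (by omega))
    · exact absurd (h.trans hc2.2.1.symm) (hinj2 i m2 (by omega) le_rfl)
  set n := m1 + m2 with hn
  set cyc : ℕ → V := fun i => if i ≤ m1 then c1 i else c2 (n - i) with hcyc
  have hcyc1 : ∀ i, i ≤ m1 → cyc i = c1 i := fun i h => if_pos h
  have hcyc2 : ∀ i, m1 ≤ i → cyc i = c2 (n - i) := by
    intro i h
    rcases Nat.eq_or_lt_of_le h with h' | h'
    · rw [hcyc]
      simp only [← h', if_pos le_rfl]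
      rw [hc1.2.1, show n - m1 = m2 by omega, hc2.2.1]
    · exact if_neg (by omega)
  have hinjlt : ∀ i j, i < j → j < n → cyc i ≠ cyc j := by
    intro i j hij hjn heq
    rcases le_or_gt j m1 with hj | hj
    · rw [hcyc1 i (by omega), hcyc1 j hj] at heq
      exact hinj1 i j hij hj heq
    · rcases le_or_gt m1 i with hi | hi
      · rw [hcyc2 i hi, hcyc2 j (by omega)] at heq
        exact hinj2 (n - j) (n - i) (by omega) (by omega) heq.symm
      · -- i < m1 < j
        rw [hcyc1 i (by omega), hcyc2 j (by omega)] at heq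
        have hjv : c2 (n - j) ∈ Cv := hint2 (n - j) (by omega) (by omega)
        rcases Nat.eq_zero_or_pos i with h0 | h0
        · subst h0
          rw [hc1.1] at heq
          exact hCvS _ hjv (heq ▸ hx)
        · exact hdisj _ (heq ▸ hint1 i (by omega) (by omega)) hjv
  obtain ⟨i, j, hij2, hjn, hne0, hadj⟩ := by
    refine chordal_chord hG (show 4 ≤ n by omega) cyc ?_ ?_ ?_
    · intro i j hi hj heq
      rcases lt_trichotomy i j with h | h | h
      · exact absurd heq (hinjlt i j h hj)
      · exact h
      · exact absurd heq.symm (hinjlt j i h hi)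
    · intro i hi
      rcases Nat.lt_or_ge i m1 with h | h
      · rw [hcyc1 i (by omega), hcyc1 (i+1) (by omega)]
        exact hc1.2.2.1 i h
      · rw [hcyc2 i h, hcyc2 (i+1) (by omega), show n - i = (n - (i+1)) + 1 by omega]
        exact (hc2.2.2.1 (n - (i+1)) (by omega)).symm
    · rw [hcyc2 (n-1) (by omega), hcyc1 0 (by omega), show n - (n-1) = 1 by omega, hc1.1,
        ← hc2.1]
      exact (hc2.2.2.1 0 (by omega)).symm
  rcases le_or_gt j m1 with hj | hj
  · rw [hcyc1 i (by omega), hcyc1 j hj] at hadj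
    exact hnochord1 i j hij2 hj hadj
  · rcases le_or_gt m1 i with hi | hi
    · rw [hcyc2 i hi, hcyc2 j (by omega)] at hadj
      exact hnochord2 (n - j) (n - i) (by omega) (by omega) hadj.symm
    · rw [hcyc1 i (by omega), hcyc2 j (by omega)] at hadj
      rcases Nat.eq_zero_or_pos i with h0 | h0
      · subst h0
        rcases Nat.lt_or_ge (n - j) 2 with h2 | h2
        · exact hne0 ⟨rfl, by omega⟩
        · rw [hc1.1, ← hc2.1] at hadj
          exact hnochord2 0 (n - j) (by omega) (by omega) hadj
      · exact hnoedge _ _ (hint1 i (by omega) (by omega))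
          (hint2 (n - j) (by omega) (by omega)) hadj


/-- In a chordal graph, if every vertex of the clique separator `S` has a neighbour in the
component of `w`, then some vertex of that component is adjacent to all of `S`. -/
lemma sep_full (hG : Chordal G) {w : V} {S : Finset V} (hw : w ∉ S)
    (hclique : ∀ x ∈ S, ∀ y ∈ S, x ≠ y → G.Adj x y)
    (hnbr : ∀ x ∈ S, ∃ a, AReach G S w a ∧ G.Adj a x) :
    ∃ b, AReach G S w b ∧ ∀ x ∈ S, G.Adj b x := by
  classical
  set C : Set V := {z | AReach G S w z} with hC
  have hCS : ∀ z, z ∈ C → z ∉ S := fun z h => h.right_not_mem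
  set f : V → ℕ := fun b => (S.filter (fun s => G.Adj b s)).card with hf
  obtain ⟨b, hb, hbmax'⟩ :=
    Set.Finite.exists_maximalFor f C (Set.toFinite C) ⟨w, AReach.refl hw⟩
  have hbmax : ∀ b' ∈ C, f b' ≤ f b := by
    intro b' hb'
    by_contra hlt
    exact absurd (hbmax' hb' (by omega)) (by omega)
  refine ⟨b, hb, fun x hx => ?_⟩
  by_contra hnadj
  have hbx : b ≠ x := fun h => (hCS b hb) (h ▸ hx)
  obtain ⟨a, haw, hax⟩ := hnbr x hx
  have hex : ∃ m c, Chn G C b x c m := by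
    obtain ⟨w0, hw0⟩ := hb.symm.trans haw
    refine ⟨_, (w0.concat hax).getVert,
      Walk.getVert_zero _, Walk.getVert_length _, fun i hi => Walk.adj_getVert_succ _ hi, ?_⟩
    intro i hi
    have hmem : (w0.concat hax).getVert i ∈ (w0.concat hax).support :=
      Walk.mem_support_iff_exists_getVert.2 ⟨i, rfl, hi⟩
    rw [Walk.support_concat, List.mem_append] at hmem
    rcases hmem with h | h
    · left
      exact hb.trans (AReach.of_mem_support (⟨w0, hw0⟩) w0 hw0 h)
    · right; right; simpa using h
  obtain ⟨c, m, hc, hm, hinj, hnochord⟩ := exists_min_chn hbx hnadj hex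
  have hmemC : ∀ i, i ≤ m - 1 → c i ∈ C := by
    intro i hi
    rcases hc.2.2.2 i (by omega) with h | h | h
    · exact h
    · rcases Nat.eq_zero_or_pos i with h0 | h0
      · rw [h0, hc.1]; exact hb
      · exact absurd (hc.1.trans h.symm) (hinj 0 i (by omega) (by omega))
    · exact absurd (h.trans hc.2.1.symm) (hinj i m (by omega) le_rfl)
  have hb'x : G.Adj (c (m - 1)) x := by
    have := hc.2.2.1 (m - 1) (by omega)
    rwa [show m - 1 + 1 = m by omega, hc.2.1] at this
  -- find y adjacent to b but not to c (m-1)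
  obtain ⟨y, hy, hby, hnb'y⟩ : ∃ y ∈ S, G.Adj b y ∧ ¬ G.Adj (c (m - 1)) y := by
    by_contra hcon
    push_neg at hcon
    have hsub : insert x (S.filter (fun s => G.Adj b s)) ⊆
        S.filter (fun s => G.Adj (c (m - 1)) s) := by
      intro z hz
      rcases Finset.mem_insert.1 hz with h | h
      · subst h; exact Finset.mem_filter.2 ⟨hx, hb'x⟩
      · obtain ⟨hz1, hz2⟩ := Finset.mem_filter.1 h
        exact Finset.mem_filter.2 ⟨hz1, hcon z hz1 hz2⟩
    have hcard := Finset.card_le_card hsub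
    rw [Finset.card_insert_of_notMem (by simp [hnadj])] at hcard
    have := hbmax (c (m - 1)) (hmemC (m - 1) le_rfl)
    simp only [hf] at this hcard
    omega
  have hyx : y ≠ x := fun h => hnadj (h ▸ hby)
  have hxy' : G.Adj x y := (hclique y hy x hx hyx).symm
  have hyC : y ∉ C := fun h => hCS y h hy
  set P : ℕ → Prop := fun i => G.Adj y (c i) with hP
  have hP0 : P 0 := by show G.Adj y (c 0); rw [hc.1]; exact hby.symm
  set i0 := Nat.findGreatest P (m - 2) with hi0
  have hi0P : P i0 := Nat.findGreatest_spec (Nat.zero_le _) hP0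
  have hi0le : i0 ≤ m - 2 := Nat.findGreatest_le _
  have hgr : ∀ i, i0 < i → i ≤ m - 1 → ¬ P i := by
    intro i h1 h2
    rcases Nat.eq_or_lt_of_le h2 with h' | h'
    · rw [h']
      intro hPi
      exact hnb'y (hPi.symm)
    · exact Nat.findGreatest_is_greatest h1 (by omega)
  have hyne : ∀ i, i ≤ m → y ≠ c i := by
    intro i hi heq
    rcases Nat.eq_or_lt_of_le hi with h' | h'
    · rw [h', hc.2.1] at heq; exact hyx heq
    · exact hyC (heq ▸ hmemC i (by omega))
  set n := m - i0 + 2 with hn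
  set cyc : ℕ → V := fun j => if j = 0 then y else c (i0 + j - 1) with hcyc
  have hcyc0 : cyc 0 = y := rfl
  have hcycp : ∀ j, 1 ≤ j → cyc j = c (i0 + j - 1) := fun j h => if_neg (by omega)
  obtain ⟨i, j, hij2, hjn, hne0, hadj⟩ := by
    refine chordal_chord hG (show 4 ≤ n by omega) cyc ?_ ?_ ?_
    · intro i j hi hj heq
      rcases Nat.eq_zero_or_pos i with h0 | h0
      · rcases Nat.eq_zero_or_pos j with h1 | h1
        · omega
        · rw [h0, hcyc0, hcycp j h1] at heq
          exact absurd heq (hyne _ (by omega))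
      · rcases Nat.eq_zero_or_pos j with h1 | h1
        · rw [h1, hcyc0, hcycp i h0] at heq
          exact absurd heq.symm (hyne _ (by omega))
        · rw [hcycp i h0, hcycp j h1] at heq
          rcases lt_trichotomy i j with h | h | h
          · exact absurd heq (hinj _ _ (by omega) (by omega))
          · exact h
          · exact absurd heq.symm (hinj _ _ (by omega) (by omega))
    · intro i hi
      rcases Nat.eq_zero_or_pos i with h0 | h0
      · rw [h0, hcyc0, hcycp 1 le_rfl, show i0 + 1 - 1 = i0 from rfl]
        exact hi0P
      · rw [hcycp i h0, hcycp (i + 1) (by omega),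
          show i0 + (i + 1) - 1 = (i0 + i - 1) + 1 by omega]
        exact hc.2.2.1 _ (by omega)
    · rw [hcycp (n - 1) (by omega), hcyc0, show i0 + (n - 1) - 1 = m by omega, hc.2.1]
      exact hxy'
  rcases Nat.eq_zero_or_pos i with h0 | h0
  · rw [h0, hcyc0, hcycp j (by omega)] at hadj
    have hj2 : j ≤ n - 2 := by
      rcases Nat.eq_or_lt_of_le (show j ≤ n - 1 by omega) with h' | h'
      · exact absurd ⟨h0, h'⟩ hne0
      · omega
    exact hgr (i0 + j - 1) (by omega) (by omega) hadj
  · rw [hcycp i h0, hcycp j (by omega)] at hadj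
    exact hnochord (i0 + i - 1) (i0 + j - 1) (by omega) (by omega) hadj


/-- From a walk to `x` whose support meets `S` only in `x`, extract a neighbour of `x`
reachable from the start avoiding `S`. -/
lemma nbr_of_walk {S : Finset V} {x u : V} (w : G.Walk u x) :
    u ≠ x → (∀ z ∈ w.support, z ∈ S → z = x) →
    ∃ a, AReach G S u a ∧ G.Adj a x := by
  induction w with
  | nil => intro h _; exact absurd rfl h
  | @cons u b x h p ih =>
    intro hne hsupp
    have hu : u ∉ S := fun hus => hne (hsupp u (Walk.start_mem_support _) hus)
    by_cases hbx : b = x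
    · subst hbx; exact ⟨u, AReach.refl hu, h⟩
    · have hb : b ∉ S := fun hbs => hbx
        (hsupp b (by rw [Walk.support_cons]; exact List.mem_cons_of_mem _ p.start_mem_support) hbs)
      obtain ⟨a, hba, hax⟩ := ih hbx
        (fun z hz => hsupp z (by rw [Walk.support_cons]; exact List.mem_cons_of_mem _ hz))
      exact ⟨a, ((AReach.refl hu).adj h hb).trans hba, hax⟩

lemma exists_maxclique {s : Set V} (hs : G.IsClique s) :
    ∃ M, IsMaxClique G M ∧ s ⊆ M := by
  obtain ⟨M, hM, hmax⟩ := Set.Finite.exists_maximalFor id {t : Set V | G.IsClique t ∧ s ⊆ t}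
    (Set.toFinite _) ⟨s, hs, subset_rfl⟩
  exact ⟨M, ⟨hM.1, fun t ht hMt => Set.Subset.antisymm (hmax ⟨ht, hM.2.trans hMt⟩ hMt) hMt⟩, hM.2⟩

end TBAux

/-- `G` is a `t`-block graph (chordal, and any two distinct maximal cliques intersect
in at most `t` vertices) iff `G` is chordal and a `t`-flow graph (every pair of distinct
non-adjacent vertices can be disconnected by removing at most `t` vertices). -/
theorem stmt_16 {V : Type*} [Fintype V] [DecidableEq V] (t : ℕ) (ht : 1 ≤ t)
    (G : SimpleGraph V) :
    (Chordal G ∧ ∀ s s' : Set V, IsMaxClique G s → IsMaxClique G s' → s ≠ s' →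
        (s ∩ s').ncard ≤ t) ↔
    (Chordal G ∧ ∀ u v : V, u ≠ v → ¬ G.Adj u v →
        ∃ S : Finset V, S.card ≤ t ∧ u ∉ S ∧ v ∉ S ∧
          ¬ ∃ w : G.Walk u v, ∀ x ∈ w.support, x ∉ S) := by
  classical
  open TBAux SimpleGraph in
  constructor
  · rintro ⟨hch, hcap⟩
    refine ⟨hch, fun u v huv hnadj => ?_⟩
    have hex : ∃ k, ∃ S : Finset V,
        (u ∉ S ∧ v ∉ S ∧ ¬ AReach G S u v) ∧ S.card = k := by
      refine ⟨_, Finset.univ \ {u, v}, ⟨by simp, by simp, ?_⟩, rfl⟩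
      rintro ⟨w, hw⟩
      cases w with
      | nil => exact huv rfl
      | @cons _ b _ h p =>
        apply hw b (by rw [Walk.support_cons]; exact List.mem_cons_of_mem _ p.start_mem_support)
        simp only [Finset.mem_sdiff, Finset.mem_univ, true_and, Finset.mem_insert,
          Finset.mem_singleton]
        push_neg
        exact ⟨fun hbu => G.irrefl (hbu ▸ h), fun hbv => hnadj (hbv ▸ h)⟩
    obtain ⟨S, ⟨huS, hvS, hsep⟩, hcard⟩ := Nat.find_spec hex
    have hmin : ∀ S' : Finset V, (u ∉ S' ∧ v ∉ S' ∧ ¬ AReach G S' u v) →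
        Nat.find hex ≤ S'.card := fun S' h => Nat.find_min' hex ⟨S', h, rfl⟩
    have hnbr : ∀ x ∈ S, (∃ a, AReach G S u a ∧ G.Adj a x) ∧
        (∃ a, AReach G S v a ∧ G.Adj a x) := by
      intro x hxS
      have h1 : AReach G (S.erase x) u v := by
        by_contra hno
        have hle := hmin (S.erase x) ⟨fun h => huS (Finset.mem_of_mem_erase h),
          fun h => hvS (Finset.mem_of_mem_erase h), hno⟩
        rw [Finset.card_erase_of_mem hxS] at hle
        have hpos : 0 < S.card := Finset.card_pos.2 ⟨x, hxS⟩
        omega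
      obtain ⟨wk, hwk⟩ := h1
      have hxsupp : x ∈ wk.support := by
        by_contra hxn
        exact hsep ⟨wk, fun z hz hzS =>
          (hwk z hz) (Finset.mem_erase.2 ⟨fun hzx => hxn (hzx ▸ hz), hzS⟩)⟩
      have hcond : ∀ z ∈ wk.support, z ∈ S → z = x := by
        intro z hz hzS
        by_contra hzx
        exact hwk z hz (Finset.mem_erase.2 ⟨hzx, hzS⟩)
      constructor
      · exact nbr_of_walk (wk.takeUntil x hxsupp) (fun h => huS (h ▸ hxS))
          (fun z hz => hcond z (wk.support_takeUntil_subset hxsupp hz))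
      · exact nbr_of_walk ((wk.dropUntil x hxsupp).reverse) (fun h => hvS (h ▸ hxS))
          (fun z hz => hcond z (wk.support_dropUntil_subset hxsupp
            (by rwa [Walk.support_reverse, List.mem_reverse] at hz)))
    have hclique := sep_clique hch hsep (fun x hx => (hnbr x hx).1) (fun x hx => (hnbr x hx).2)
    obtain ⟨bu, hbu, hbuadj⟩ := sep_full hch huS hclique (fun x hx => (hnbr x hx).1)
    obtain ⟨bv, hbv, hbvadj⟩ := sep_full hch hvS hclique (fun x hx => (hnbr x hx).2)
    have hclA : G.IsClique (↑S ∪ {bu}) := by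
      intro p hp q hq hpq
      rcases hp with hp | hp <;> rcases hq with hq | hq
      · exact hclique p hp q hq hpq
      · rw [Set.mem_singleton_iff] at hq; subst hq; exact (hbuadj p hp).symm
      · rw [Set.mem_singleton_iff] at hp; subst hp; exact hbuadj q hq
      · rw [Set.mem_singleton_iff] at hp hq; exact absurd (hp.trans hq.symm) hpq
    have hclB : G.IsClique (↑S ∪ {bv}) := by
      intro p hp q hq hpq
      rcases hp with hp | hp <;> rcases hq with hq | hq
      · exact hclique p hp q hq hpq
      · rw [Set.mem_singleton_iff] at hq; subst hq; exact (hbvadj p hp).symm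
      · rw [Set.mem_singleton_iff] at hp; subst hp; exact hbvadj q hq
      · rw [Set.mem_singleton_iff] at hp hq; exact absurd (hp.trans hq.symm) hpq
    obtain ⟨A, hA, hSA⟩ := exists_maxclique hclA
    obtain ⟨B, hB, hSB⟩ := exists_maxclique hclB
    have hABne : A ≠ B := by
      intro hAB
      have hbuB : bu ∈ B := hAB ▸ hSA (Or.inr rfl)
      have hbvB : bv ∈ B := hSB (Or.inr rfl)
      have hbune : bu ≠ bv := fun h => hsep (hbu.trans (h ▸ hbv).symm)
      exact hsep ((hbu.adj (hB.1 hbuB hbvB hbune) hbv.right_not_mem).trans hbv.symm)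
    refine ⟨S, ?_, huS, hvS, hsep⟩
    calc S.card = (↑S : Set V).ncard := (Set.ncard_coe_finset S).symm
      _ ≤ (A ∩ B).ncard := Set.ncard_le_ncard
            (fun z hz => ⟨hSA (Or.inl hz), hSB (Or.inl hz)⟩) (Set.toFinite _)
      _ ≤ t := hcap A B hA hB hABne
  · rintro ⟨hch, hflow⟩
    refine ⟨hch, fun A B hA hB hAB => ?_⟩
    have hexuv : ∃ u ∈ A, ∃ v ∈ B, u ≠ v ∧ ¬ G.Adj u v := by
      by_contra hcon
      push_neg at hcon
      have hABcl : G.IsClique (A ∪ B) := by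
        intro p hp q hq hpq
        rcases hp with hp | hp <;> rcases hq with hq | hq
        · exact hA.1 hp hq hpq
        · exact hcon p hp q hq hpq
        · exact (hcon q hq p hp (Ne.symm hpq)).symm
        · exact hB.1 hp hq hpq
      have h1 := hA.2 (A ∪ B) hABcl Set.subset_union_left
      have hBA : B ⊆ A := h1 ▸ Set.subset_union_right
      exact hAB (hB.2 A hA.1 hBA)
    obtain ⟨u, huA, v, hvB, huv, hnadj⟩ := hexuv
    have huB : u ∉ B := fun h => hnadj (hB.1 h hvB huv)
    have hvA : v ∉ A := fun h => hnadj (hA.1 huA h huv)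
    obtain ⟨S, hScard, huS, hvS, hsep⟩ := hflow u v huv hnadj
    have hsub : A ∩ B ⊆ ↑S := by
      rintro z ⟨hzA, hzB⟩
      by_contra hzS
      rw [Finset.mem_coe] at hzS
      apply hsep
      have hzu : z ≠ u := fun h => huB (h ▸ hzB)
      have hzv : z ≠ v := fun h => hvA (h ▸ hzA)
      refine ⟨Walk.cons (hA.1 huA hzA (Ne.symm hzu)) (Walk.cons (hB.1 hzB hvB hzv) Walk.nil), ?_⟩
      intro zz hzz
      simp only [Walk.support_cons, Walk.support_nil, List.mem_cons, List.not_mem_nil,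
        or_false] at hzz
      rcases hzz with rfl | rfl | rfl
      exacts [huS, hzS, hvS]
    calc (A ∩ B).ncard ≤ (↑S : Set V).ncard := Set.ncard_le_ncard hsub (Set.toFinite _)
      _ = S.card := Set.ncard_coe_finset S
      _ ≤ t := hScard
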